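/- arXiv:2508.19167 — 3 statements merged into one kernel-verified Lean document; each statement's English description precedes it below -/
import Mathlib

section
/- For every z ∈ ℂ \ Λ, the family of terms 1/(z−ω)² − 1/ω², indexed by ω ∈ Λ \ {0}, is summable, so the series defining the Weierstrass elliptic function ℘(z) = 1/z² + Σ_{ω ∈ Λ \ {0}} (1/(z−ω)² − 1/ω²) converges absolutely. -/
/-- The period lattice Λ = {2mω₁ + 2nω₃ : m, n ∈ ℤ}. -/
def periodLattice (ω₁ ω₃ : ℂ) : Set ℂ :=
  {z : ℂ | ∃ m n : ℤ, z = 2 * (m : ℂ) * ω₁ + 2 * (n : ℂ) * ω₃}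

/-- The ℝ-linear map `(s, t) ↦ s • α + t • β`. -/
noncomputable def latticeLinMap (α β : ℂ) : (ℝ × ℝ) →ₗ[ℝ] ℂ where
  toFun p := p.1 • α + p.2 • β
  map_add' p q := by
    simp only [Prod.fst_add, Prod.snd_add, add_smul]
    ring
  map_smul' c p := by
    simp only [Prod.smul_fst, Prod.smul_snd, smul_eq_mul, RingHom.id_apply, smul_add, smul_smul]

lemma latticeLinMap_apply (α β : ℂ) (s t : ℝ) :
    latticeLinMap α β (s, t) = (s : ℂ) * α + (t : ℂ) * β := by
  simp [latticeLinMap, Complex.real_smul]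

/-- Summability of `‖(m,n)‖ ^ (-3)` over `ℤ × ℤ`. -/
lemma aux_summable_rpow :
    Summable fun p : ℤ × ℤ => ‖((p.1 : ℝ), (p.2 : ℝ))‖ ^ (-(3 : ℝ)) := by
  have h := EisensteinSeries.summable_one_div_norm_rpow (by norm_num : (2 : ℝ) < 3)
  have h2 := ((finTwoArrowEquiv ℤ).symm.summable_iff
    (f := fun x : Fin 2 → ℤ => ‖x‖ ^ (-(3 : ℝ)))).mpr h
  refine h2.congr fun p => ?_
  have hp : ((finTwoArrowEquiv ℤ).symm p : Fin 2 → ℤ) = ![p.1, p.2] := rfl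
  show ‖((finTwoArrowEquiv ℤ).symm p : Fin 2 → ℤ)‖ ^ (-(3:ℝ)) = _
  rw [hp, EisensteinSeries.norm_eq_max_natAbs]
  simp only [Matrix.cons_val_zero, Matrix.cons_val_one, Matrix.head_cons, Prod.norm_def,
    Real.norm_eq_abs]
  congr 1
  push_cast [Nat.cast_natAbs]
  rfl

/-- For every `z ∈ ℂ \ Λ`, the family `1/(z−ω)² − 1/ω²`, indexed by
`ω ∈ Λ \ {0}`, is summable, so the series defining `℘(z)` converges absolutely. -/
theorem weierstrass_wp_series_summable
    (ω₁ ω₃ : ℂ) (hω₁ : ω₁ ≠ 0) (hω₃ : ω₃ ≠ 0)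
    (hτ : ω₃ / ω₁ ∉ Set.range ((↑) : ℝ → ℂ)) :
    ∀ z : ℂ, z ∉ periodLattice ω₁ ω₃ →
      Summable (fun w : {w : ℂ // w ∈ periodLattice ω₁ ω₃ ∧ w ≠ 0} =>
        1 / (z - (w : ℂ)) ^ 2 - 1 / (w : ℂ) ^ 2) := by
  intro z hz
  set L : (ℝ × ℝ) →ₗ[ℝ] ℂ := latticeLinMap (2 * ω₁) (2 * ω₃) with hLdef
  -- kernel of L is trivial
  have hker : ∀ s t : ℝ, L (s, t) = 0 → s = 0 ∧ t = 0 := by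
    intro s t h
    rw [latticeLinMap_apply] at h
    by_cases ht : t = 0
    · subst ht
      refine ⟨?_, rfl⟩
      simp only [Complex.ofReal_zero, zero_mul, add_zero] at h
      have := mul_eq_zero.mp h
      rcases this with h1 | h1
      · exact_mod_cast h1
      · exact absurd h1 (by simp [hω₁])
    · exfalso
      apply hτ
      refine ⟨-s / t, ?_⟩
      have ht' : (t : ℂ) ≠ 0 := by exact_mod_cast ht
      push_cast
      rw [div_eq_div_iff ht' hω₁]
      linear_combination -h / 2
  have hkerbot : LinearMap.ker L = ⊥ := by
    rw [LinearMap.ker_eq_bot']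
    rintro ⟨s, t⟩ h
    obtain ⟨h1, h2⟩ := hker s t h
    simp [h1, h2, Prod.ext_iff]
  obtain ⟨K, hK0, hK⟩ := L.exists_antilipschitzWith hkerbot
  -- the parametrization of the lattice
  set e : ℤ × ℤ → ℂ := fun p => L ((p.1 : ℝ), (p.2 : ℝ)) with hedef
  have he_apply : ∀ p : ℤ × ℤ, e p = 2 * (p.1 : ℂ) * ω₁ + 2 * (p.2 : ℂ) * ω₃ := by
    intro p
    show L ((p.1 : ℝ), (p.2 : ℝ)) = _
    rw [hLdef, latticeLinMap_apply]
    push_cast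
    ring
  have he_mem : ∀ p : ℤ × ℤ, e p ∈ periodLattice ω₁ ω₃ := fun p => ⟨p.1, p.2, (he_apply p)⟩
  have hNle : ∀ p : ℤ × ℤ, ‖((p.1 : ℝ), (p.2 : ℝ))‖ ≤ K * ‖e p‖ := by
    intro p
    have := hK.le_mul_dist ((p.1 : ℝ), (p.2 : ℝ)) 0
    simpa [dist_zero_right, map_zero] using this
  have he_inj : Function.Injective e := by
    intro p q h
    have h2 : L ((p.1 : ℝ), (p.2 : ℝ)) = L ((q.1 : ℝ), (q.2 : ℝ)) := h
    have h3 : L (((p.1 : ℝ) - q.1, (p.2 : ℝ) - q.2)) = 0 := by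
      rw [show (((p.1 : ℝ) - q.1, (p.2 : ℝ) - q.2) : ℝ × ℝ)
        = ((p.1 : ℝ), (p.2 : ℝ)) - ((q.1 : ℝ), (q.2 : ℝ)) from rfl, map_sub, h2, sub_self]
    obtain ⟨h4, h5⟩ := hker _ _ h3
    have : (p.1 : ℝ) = q.1 := by linarith
    have : (p.2 : ℝ) = q.2 := by linarith
    exact Prod.ext (by exact_mod_cast ‹(p.1 : ℝ) = q.1›) (by exact_mod_cast ‹(p.2 : ℝ) = q.2›)
  have hz0 : z ≠ 0 := fun h => hz (h ▸ ⟨0, 0, by norm_num⟩)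
  -- the function on ℤ × ℤ
  set g : ℤ × ℤ → ℂ := fun p =>
    if p = 0 then 0 else 1 / (z - e p) ^ 2 - 1 / (e p) ^ 2 with hgdef
  have hgsum : Summable g := by
    set C : ℝ := 12 * ‖z‖ * (K : ℝ) ^ 3 with hCdef
    apply Summable.of_norm_bounded_eventually
      (g := fun p : ℤ × ℤ => C * ‖((p.1 : ℝ), (p.2 : ℝ))‖ ^ (-(3 : ℝ)))
      (aux_summable_rpow.mul_left C)
    rw [Filter.eventually_cofinite]
    set R : ℝ := (K : ℝ) * (2 * ‖z‖ + 2) with hRdef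
    have hRpos : 0 < R := by positivity
    have hfin : ({p : ℤ × ℤ | ‖((p.1 : ℝ), (p.2 : ℝ))‖ < R} : Set (ℤ × ℤ)).Finite := by
      apply Set.Finite.subset ((Set.finite_Icc (-⌈R⌉) ⌈R⌉).prod (Set.finite_Icc (-⌈R⌉) ⌈R⌉))
      rintro ⟨m, n⟩ hp
      simp only [Set.mem_setOf_eq] at hp
      have hm : |(m : ℝ)| ≤ ‖((m : ℝ), (n : ℝ))‖ := by
        simpa [Real.norm_eq_abs] using norm_fst_le ((m : ℝ), (n : ℝ))
      have hn : |(n : ℝ)| ≤ ‖((m : ℝ), (n : ℝ))‖ := by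
        simpa [Real.norm_eq_abs] using norm_snd_le ((m : ℝ), (n : ℝ))
      have hRceil : R ≤ (⌈R⌉ : ℝ) := Int.le_ceil R
      constructor <;> simp only [Set.mem_Icc] <;> rw [← abs_le] <;>
        [ (have := hm.trans_lt hp); (have := hn.trans_lt hp) ] <;>
        exact_mod_cast (abs_le.mp (le_of_lt (this.trans_le hRceil))) |> abs_le.mpr
    apply hfin.subset
    intro p hp
    simp only [Set.mem_setOf_eq]
    by_contra hN
    push_neg at hN
    apply hp
    -- now R ≤ N p; derive the bound
    set N : ℝ := ‖((p.1 : ℝ), (p.2 : ℝ))‖ with hNdef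
    have hNpos : 0 < N := lt_of_lt_of_le hRpos hN
    have hK0' : (0 : ℝ) < (K : ℝ) := hK0
    have hwbig : 2 * ‖z‖ + 2 ≤ ‖e p‖ := by
      have h1 := hNle p
      have h2 : (K : ℝ) * (2 * ‖z‖ + 2) ≤ (K : ℝ) * ‖e p‖ := le_trans hN h1
      exact le_of_mul_le_mul_left h2 hK0'
    have hwpos : 0 < ‖e p‖ := by linarith [norm_nonneg z]
    have hp0 : p ≠ 0 := by
      intro h
      have : N = 0 := by
        rw [hNdef, h]
        simp [Prod.norm_def]
      linarith
    have hzw : z - e p ≠ 0 := by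
      intro h
      exact hz (by rw [show z = e p by linear_combination h]; exact he_mem p)
    have hw0 : e p ≠ 0 := by
      intro h
      rw [h, norm_zero] at hwpos
      exact lt_irrefl 0 hwpos
    have hkey : (1 : ℂ) / (z - e p) ^ 2 - 1 / (e p) ^ 2
        = z * (2 * e p - z) / ((z - e p) ^ 2 * (e p) ^ 2) := by
      field_simp
      ring
    simp only [hgdef]
    rw [if_neg hp0]
    rw [hkey]
    have hnorm : ‖z * (2 * e p - z) / ((z - e p) ^ 2 * (e p) ^ 2)‖
        = ‖z‖ * ‖2 * e p - z‖ / (‖z - e p‖ ^ 2 * ‖e p‖ ^ 2) := by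
      rw [norm_div, norm_mul, norm_mul, norm_pow, norm_pow]
    rw [hnorm]
    have hzsmall : ‖z‖ ≤ ‖e p‖ / 2 := by linarith
    have h1 : ‖e p‖ / 2 ≤ ‖z - e p‖ := by
      have := norm_sub_norm_le (e p) z
      rw [show ‖e p - z‖ = ‖z - e p‖ by rw [norm_sub_rev]] at this
      linarith
    have h2 : ‖2 * e p - z‖ ≤ 3 * ‖e p‖ := by
      calc ‖2 * e p - z‖ ≤ ‖2 * e p‖ + ‖z‖ := norm_sub_le _ _
        _ ≤ 2 * ‖e p‖ + ‖e p‖ := by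
            rw [norm_mul]
            simp only [Complex.norm_ofNat]
            linarith
        _ = 3 * ‖e p‖ := by ring
    have hNK : N ≤ K * ‖e p‖ := hNle p
    have hrpow : N ^ (-(3 : ℝ)) = (N ^ (3 : ℕ))⁻¹ := by
      rw [← Real.rpow_natCast N 3, ← Real.rpow_neg hNpos.le]
      norm_num
    rw [hrpow]
    calc ‖z‖ * ‖2 * e p - z‖ / (‖z - e p‖ ^ 2 * ‖e p‖ ^ 2)
        ≤ ‖z‖ * (3 * ‖e p‖) / ((‖e p‖ / 2) ^ 2 * ‖e p‖ ^ 2) := by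
          gcongr
      _ = 12 * ‖z‖ / ‖e p‖ ^ 3 := by
          rw [div_eq_div_iff (by positivity) (by positivity)]
          ring
      _ ≤ 12 * ‖z‖ * (K : ℝ) ^ 3 / N ^ (3 : ℕ) := by
          rw [div_le_div_iff₀ (by positivity) (by positivity)]
          have hcube : N ^ 3 ≤ ((K : ℝ) * ‖e p‖) ^ 3 :=
            pow_le_pow_left₀ hNpos.le hNK 3
          rw [mul_pow] at hcube
          have h12 := mul_le_mul_of_nonneg_left hcube
            (by positivity : (0:ℝ) ≤ 12 * ‖z‖)
          nlinarith [h12]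
      _ = 12 * ‖z‖ * (K : ℝ) ^ 3 * (N ^ (3 : ℕ))⁻¹ := by
          rw [div_eq_mul_inv]
  -- transfer summability to the subtype
  have hbij : Function.Bijective (fun p : {p : ℤ × ℤ // p ≠ 0} =>
      (⟨e p, he_mem p, fun h => p.2 (he_inj (h.trans (by simp [he_apply])))⟩ :
        {w : ℂ // w ∈ periodLattice ω₁ ω₃ ∧ w ≠ 0})) := by
    constructor
    · rintro ⟨p, hp⟩ ⟨q, hq⟩ h
      simp only [Subtype.mk_eq_mk] at h ⊢
      exact he_inj h
    · rintro ⟨w, ⟨⟨m, n, hw⟩, hw0⟩⟩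
      refine ⟨⟨(m, n), ?_⟩, ?_⟩
      · intro h
        apply hw0
        rw [hw]
        have h1 : m = 0 := by simpa using congrArg Prod.fst h
        have h2 : n = 0 := by simpa using congrArg Prod.snd h
        rw [h1, h2]
        push_cast
        ring
      · simp only [Subtype.mk_eq_mk]
        rw [he_apply, hw]
  rw [← (Equiv.ofBijective _ hbij).summable_iff]
  have : ∀ p : {p : ℤ × ℤ // p ≠ 0},
      ((fun w : {w : ℂ // w ∈ periodLattice ω₁ ω₃ ∧ w ≠ 0} =>
        1 / (z - (w : ℂ)) ^ 2 - 1 / (w : ℂ) ^ 2) ∘ (Equiv.ofBijective _ hbij)) p = g p := by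
    intro p
    simp only [Function.comp_apply, Equiv.ofBijective_apply, hgdef, if_neg p.2]
  exact (hgsum.subtype {p : ℤ × ℤ | p ≠ 0}).congr fun p => (this p).symm
end

section
/- For every z ∈ ℂ \ Λ, the family of terms −2/(z−ω)³, indexed by ω ∈ Λ (including ω = 0), is summable, the function ℘ has complex derivative ℘'(z) = −2 Σ_{ω ∈ Λ} 1/(z−ω)³ at z, and ℘' is odd: ℘'(−z) = −℘'(z). -/
open Complex Module

namespace WPaux

noncomputable def latmap (ω₁ ω₃ : ℂ) (x : Fin 2 → ℤ) : ℂ :=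
  2 * (x 0 : ℂ) * ω₁ + 2 * (x 1 : ℂ) * ω₃

variable (ω₁ ω₃ : ℂ)

lemma latmap_mem (x : Fin 2 → ℤ) : latmap ω₁ ω₃ x ∈ periodLattice ω₁ ω₃ :=
  ⟨x 0, x 1, rfl⟩

lemma latmap_zero : latmap ω₁ ω₃ 0 = 0 := by simp [latmap]

lemma mem_iff {z : ℂ} : z ∈ periodLattice ω₁ ω₃ ↔ ∃ x : Fin 2 → ℤ, latmap ω₁ ω₃ x = z := by
  constructor
  · rintro ⟨m, n, rfl⟩
    exact ⟨![m, n], by simp [latmap]⟩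
  · rintro ⟨x, rfl⟩
    exact ⟨x 0, x 1, rfl⟩


lemma exists_bound (hω₁ : ω₁ ≠ 0)
    (hτ : ω₃ / ω₁ ∉ Set.range ((↑) : ℝ → ℂ)) :
    ∃ C > 0, ∀ x : Fin 2 → ℤ, ‖x‖ ≤ C * ‖latmap ω₁ ω₃ x‖ := by
  have hind : LinearIndependent ℝ ![ω₁, ω₃] := by
    rw [LinearIndependent.pair_iff]
    intro s t hst
    rw [real_smul, real_smul] at hst
    rcases eq_or_ne t 0 with ht | ht
    · subst ht
      push_cast at hst
      simp only [zero_mul, add_zero, mul_eq_zero] at hst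
      rcases hst with h | h
      · exact ⟨by exact_mod_cast h, rfl⟩
      · exact absurd h hω₁
    · exfalso
      apply hτ
      refine ⟨-(s / t), ?_⟩
      have ht' : (t : ℂ) ≠ 0 := by exact_mod_cast ht
      push_cast
      field_simp
      linear_combination -hst
  have hcard : Fintype.card (Fin 2) = finrank ℝ ℂ := by
    simp [Complex.finrank_real_complex]
  set b : Basis (Fin 2) ℝ ℂ := basisOfLinearIndependentOfCardEqFinrank hind hcard with hb
  have hb0 : b 0 = ω₁ := by
    rw [hb, coe_basisOfLinearIndependentOfCardEqFinrank]; rfl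
  have hb1 : b 1 = ω₃ := by
    rw [hb, coe_basisOfLinearIndependentOfCardEqFinrank]; rfl
  set f : ℂ →L[ℝ] (Fin 2 → ℝ) := LinearMap.toContinuousLinearMap b.equivFun.toLinearMap with hf
  refine ⟨‖f‖ + 1, by positivity, fun x => ?_⟩
  have hw : latmap ω₁ ω₃ x = (2 * (x 0 : ℝ)) • b 0 + (2 * (x 1 : ℝ)) • b 1 := by
    rw [hb0, hb1, real_smul, real_smul]
    simp only [latmap]
    push_cast
    ring
  have hcoord : ∀ i, b.equivFun (latmap ω₁ ω₃ x) i = 2 * (x i : ℝ) := by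
    intro i
    rw [hw]
    simp only [map_add, map_smul, Pi.add_apply, Pi.smul_apply, Basis.equivFun_self,
      smul_eq_mul]
    fin_cases i <;> simp
  have hfw : ∀ w : ℂ, f w = b.equivFun w := fun w => rfl
  rw [pi_norm_le_iff_of_nonneg (by positivity)]
  intro i
  have h1 : ‖x i‖ ≤ ‖b.equivFun (latmap ω₁ ω₃ x) i‖ := by
    rw [hcoord i, Int.norm_eq_abs, Real.norm_eq_abs]
    rw [abs_mul]
    nlinarith [abs_nonneg ((x i : ℝ)), abs_nonneg (2:ℝ), abs_two (α := ℝ)]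
  calc ‖x i‖ ≤ ‖b.equivFun (latmap ω₁ ω₃ x) i‖ := h1
    _ ≤ ‖f (latmap ω₁ ω₃ x)‖ := by rw [hfw]; exact norm_le_pi_norm _ i
    _ ≤ ‖f‖ * ‖latmap ω₁ ω₃ x‖ := f.le_opNorm _
    _ ≤ (‖f‖ + 1) * ‖latmap ω₁ ω₃ x‖ := by
        have := norm_nonneg (latmap ω₁ ω₃ x); nlinarith


lemma latmap_sub (x y : Fin 2 → ℤ) :
    latmap ω₁ ω₃ (x - y) = latmap ω₁ ω₃ x - latmap ω₁ ω₃ y := by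
  simp only [latmap, Pi.sub_apply]; push_cast; ring


lemma latmap_inj {C : ℝ} (hC : 0 < C)
    (hb : ∀ x : Fin 2 → ℤ, ‖x‖ ≤ C * ‖latmap ω₁ ω₃ x‖) :
    Function.Injective (latmap ω₁ ω₃) := by
  intro x y hxy
  have h0 : latmap ω₁ ω₃ (x - y) = 0 := by rw [latmap_sub, hxy, sub_self]
  have := hb (x - y)
  rw [h0, norm_zero, mul_zero] at this
  have : x - y = 0 := norm_le_zero_iff.mp this
  exact sub_eq_zero.mp this


lemma finite_bdd (B : ℝ) : {x : Fin 2 → ℤ | ‖x‖ ≤ B}.Finite := by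
  apply Set.Finite.subset (Set.finite_Icc (fun _ : Fin 2 => (-⌈B⌉ : ℤ)) fun _ => ⌈B⌉)
  intro x hx
  simp only [Set.mem_setOf_eq] at hx
  rw [Set.mem_Icc]
  constructor <;> intro i
  all_goals
    have h1 : ‖x i‖ ≤ B := le_trans (norm_le_pi_norm x i) hx
    rw [Int.norm_eq_abs] at h1
    have h2 : |(x i : ℝ)| ≤ (⌈B⌉ : ℝ) := le_trans h1 (Int.le_ceil B)
    have h3 : |x i| ≤ ⌈B⌉ := by exact_mod_cast h2
    have := abs_le.mp h3
  · exact this.1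
  · exact this.2


lemma summable_bound (A K B : ℝ) :
    Summable (fun x : Fin 2 → ℤ => if ‖x‖ ≤ B then A else K * ‖x‖ ^ (-(3 : ℝ))) := by
  have h1 : Summable (fun x : Fin 2 → ℤ => K * ‖x‖ ^ (-(3 : ℝ))) :=
    (EisensteinSeries.summable_one_div_norm_rpow (by norm_num)).mul_left K
  apply h1.congr_cofinite
  rw [Filter.eventuallyEq_iff_exists_mem]
  refine ⟨{x | ‖x‖ ≤ B}ᶜ, ?_, fun x hx => ?_⟩
  · rw [Filter.mem_cofinite, compl_compl]
    exact finite_bdd B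
  · simp only [Set.mem_compl_iff, Set.mem_setOf_eq] at hx
    simp [hx]


lemma exists_delta {C : ℝ} (hC : 0 < C)
    (hb : ∀ x : Fin 2 → ℤ, ‖x‖ ≤ C * ‖latmap ω₁ ω₃ x‖)
    {z : ℂ} (hz : z ∉ periodLattice ω₁ ω₃) :
    ∃ δ : ℝ, 0 < δ ∧ δ ≤ 1 ∧ ∀ x : Fin 2 → ℤ, δ ≤ ‖z - latmap ω₁ ω₃ x‖ := by
  have hzne : ∀ x : Fin 2 → ℤ, z ≠ latmap ω₁ ω₃ x := by
    intro x h
    exact hz ⟨x 0, x 1, h⟩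
  have hT : {x : Fin 2 → ℤ | ‖z - latmap ω₁ ω₃ x‖ < 1}.Finite := by
    apply (finite_bdd (C * (1 + ‖z‖))).subset
    intro x hx
    simp only [Set.mem_setOf_eq] at hx ⊢
    have h1 : ‖latmap ω₁ ω₃ x‖ ≤ 1 + ‖z‖ := by
      have := norm_sub_norm_le (z - latmap ω₁ ω₃ x + latmap ω₁ ω₃ x) (latmap ω₁ ω₃ x)
      have h2 := norm_add_le (z - latmap ω₁ ω₃ x) (latmap ω₁ ω₃ x)
      simp only [sub_add_cancel] at h2
      have h3 : ‖latmap ω₁ ω₃ x‖ ≤ ‖z - latmap ω₁ ω₃ x‖ + ‖z‖ := by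
        have := norm_sub_le (latmap ω₁ ω₃ x - z) (-z)
        calc ‖latmap ω₁ ω₃ x‖ = ‖(latmap ω₁ ω₃ x - z) + z‖ := by ring_nf
          _ ≤ ‖latmap ω₁ ω₃ x - z‖ + ‖z‖ := norm_add_le _ _
          _ = ‖z - latmap ω₁ ω₃ x‖ + ‖z‖ := by rw [norm_sub_rev]
      linarith
    calc ‖x‖ ≤ C * ‖latmap ω₁ ω₃ x‖ := hb x
      _ ≤ C * (1 + ‖z‖) := by nlinarith
  classical
  set F : Finset ℝ := insert (1 : ℝ)
    (hT.toFinset.image fun x => ‖z - latmap ω₁ ω₃ x‖) with hF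
  have hFne : F.Nonempty := ⟨1, Finset.mem_insert_self _ _⟩
  refine ⟨F.min' hFne, ?_, ?_, ?_⟩
  · have hpos : ∀ a ∈ F, 0 < a := by
      intro a ha
      rw [hF, Finset.mem_insert, Finset.mem_image] at ha
      rcases ha with h | ⟨x, _, hx⟩
      · exact lt_of_lt_of_eq one_pos h.symm
      · refine lt_of_lt_of_eq ?_ hx
        rw [norm_pos_iff, sub_ne_zero]
        exact hzne x
    exact hpos _ (F.min'_mem hFne)
  · exact F.min'_le 1 (Finset.mem_insert_self _ _)
  · intro x
    by_cases hx : ‖z - latmap ω₁ ω₃ x‖ < 1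
    · apply F.min'_le
      rw [hF, Finset.mem_insert, Finset.mem_image]
      exact Or.inr ⟨x, hT.mem_toFinset.mpr hx, rfl⟩
    · push_neg at hx
      exact le_trans (F.min'_le 1 (Finset.mem_insert_self _ _)) hx


lemma hasDerivAt_term (w z : ℂ) (h : z ≠ w) :
    HasDerivAt (fun y => 1 / (y - w) ^ 2) (-2 / (z - w) ^ 3) z := by
  have hne : z - w ≠ 0 := sub_ne_zero.mpr h
  have h1 : HasDerivAt (fun y : ℂ => (y - w) ^ 2) (2 * (z - w)) z := by
    simpa using ((hasDerivAt_id z).sub_const w).fun_pow 2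
  have h2 := (hasDerivAt_const z (1 : ℂ)).fun_div h1 (pow_ne_zero 2 hne)
  refine h2.congr_deriv ?_
  field_simp
  ring

end WPaux

/-- The Weierstrass elliptic function ℘. -/
noncomputable def weierstrassP (ω₁ ω₃ : ℂ) (z : ℂ) : ℂ :=
  1 / z ^ 2 + ∑' w : {w : ℂ // w ∈ periodLattice ω₁ ω₃ ∧ w ≠ 0},
    (1 / (z - (w : ℂ)) ^ 2 - 1 / (w : ℂ) ^ 2)

/-- The derivative series ℘'(z) = −2 Σ_{ω ∈ Λ} 1/(z−ω)³ (sum over all of Λ,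
including ω = 0). -/
noncomputable def weierstrassPDeriv (ω₁ ω₃ : ℂ) (z : ℂ) : ℂ :=
  ∑' w : {w : ℂ // w ∈ periodLattice ω₁ ω₃}, (-2 / (z - (w : ℂ)) ^ 3)

set_option maxHeartbeats 4000000 in
/-- For `z ∈ ℂ \ Λ`: the family `−2/(z−ω)³` (ω ∈ Λ) is summable, ℘ has complex
derivative `℘'(z) = −2 Σ_{ω ∈ Λ} 1/(z−ω)³` at `z`, and ℘' is odd. -/
theorem weierstrassP_hasDerivAt_and_deriv_odd
    (ω₁ ω₃ : ℂ) (hω₁ : ω₁ ≠ 0) (hω₃ : ω₃ ≠ 0)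
    (hτ : ω₃ / ω₁ ∉ Set.range ((↑) : ℝ → ℂ)) :
    ∀ z : ℂ, z ∉ periodLattice ω₁ ω₃ →
      Summable (fun w : {w : ℂ // w ∈ periodLattice ω₁ ω₃} =>
        -2 / (z - (w : ℂ)) ^ 3) ∧
      HasDerivAt (weierstrassP ω₁ ω₃) (weierstrassPDeriv ω₁ ω₃ z) z ∧
      weierstrassPDeriv ω₁ ω₃ (-z) = - weierstrassPDeriv ω₁ ω₃ z := by
  classical
  intro z hz
  obtain ⟨C, hC, hCb⟩ := WPaux.exists_bound ω₁ ω₃ hω₁ hτ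
  have hinj := WPaux.latmap_inj ω₁ ω₃ hC hCb
  obtain ⟨δ, hδ0, hδ1, hδ⟩ := WPaux.exists_delta ω₁ ω₃ hC hCb hz
  set φ := WPaux.latmap ω₁ ω₃ with hφdef
  have h0mem : (0 : ℂ) ∈ periodLattice ω₁ ω₃ := ⟨0, 0, by simp⟩
  have hz0 : z ≠ 0 := fun h => hz (h ▸ h0mem)
  set ρ : ℝ := δ / 2 with hρdef
  have hρ : 0 < ρ := by positivity
  set B : ℝ := max 1 (2 * C * (‖z‖ + ρ)) with hBdef
  have hB1 : (1 : ℝ) ≤ B := le_max_left _ _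
  have hB2 : 2 * C * (‖z‖ + ρ) ≤ B := le_max_right _ _
  -- rpow helper
  have hrp : ∀ r : ℝ, 0 ≤ r → r ^ (-(3 : ℝ)) = (r ^ 3)⁻¹ := by
    intro r hr
    rw [Real.rpow_neg hr, show (3 : ℝ) = ((3 : ℕ) : ℝ) by norm_num, Real.rpow_natCast]
  -- ball lower bound
  have hball : ∀ (x : Fin 2 → ℤ), ∀ y ∈ Metric.ball z ρ, δ / 2 ≤ ‖y - φ x‖ := by
    intro x y hy
    have h1 : ‖z - y‖ < ρ := by
      rw [norm_sub_rev, ← dist_eq_norm]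
      exact Metric.mem_ball.mp hy
    have h2 := hδ x
    have h3 : ‖z - φ x‖ ≤ ‖z - y‖ + ‖y - φ x‖ := by
      have he : z - φ x = (z - y) + (y - φ x) := by ring
      rw [he]; exact norm_add_le _ _
    rw [hρdef] at h1
    linarith
  -- far lower bound
  have hbig : ∀ (x : Fin 2 → ℤ), B < ‖x‖ → ∀ y ∈ Metric.ball z ρ,
      ‖x‖ / (2 * C) ≤ ‖y - φ x‖ := by
    intro x hx y hy
    have hyz : ‖y - z‖ < ρ := by rw [← dist_eq_norm]; exact Metric.mem_ball.mp hy
    have hy' : ‖y‖ ≤ ‖z‖ + ρ := by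
      have he : y = (y - z) + z := by ring
      calc ‖y‖ = ‖(y - z) + z‖ := by rw [← he]
        _ ≤ ‖y - z‖ + ‖z‖ := norm_add_le _ _
        _ ≤ ‖z‖ + ρ := by linarith
    have h1 : ‖x‖ ≤ C * ‖φ x‖ := hCb x
    have h2 : ‖φ x‖ ≤ ‖y - φ x‖ + ‖y‖ := by
      have he : φ x = -(y - φ x) + y := by ring
      calc ‖φ x‖ = ‖-(y - φ x) + y‖ := by rw [← he]
        _ ≤ ‖-(y - φ x)‖ + ‖y‖ := norm_add_le _ _
        _ = ‖y - φ x‖ + ‖y‖ := by rw [norm_neg]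
    rw [div_le_iff₀ (by positivity)]
    nlinarith [mul_le_mul_of_nonneg_left h2 hC.le, mul_le_mul_of_nonneg_left hy' hC.le]
  -- norm of derivative terms
  have hnorm3 : ∀ y w : ℂ, ‖(-2 : ℂ) / (y - w) ^ 3‖ = 2 / ‖y - w‖ ^ 3 := by
    intro y w
    rw [norm_div, norm_neg, norm_pow]
    norm_num
  -- bound u for derivative terms
  set u : (Fin 2 → ℤ) → ℝ :=
    fun x => if ‖x‖ ≤ B then 2 / (δ / 2) ^ 3 else 2 * (2 * C) ^ 3 * ‖x‖ ^ (-(3 : ℝ)) with hudef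
  have husum : Summable u := WPaux.summable_bound _ _ _
  have hubound : ∀ (x : Fin 2 → ℤ), ∀ y ∈ Metric.ball z ρ,
      ‖(-2 : ℂ) / (y - φ x) ^ 3‖ ≤ u x := by
    intro x y hy
    rw [hnorm3, hudef]
    dsimp only
    split_ifs with h
    · have h1 := hball x y hy
      gcongr
    · push_neg at h
      have h1 := hbig x h y hy
      have hxpos : (0 : ℝ) < ‖x‖ := by linarith
      rw [hrp _ (norm_nonneg x)]
      calc 2 / ‖y - φ x‖ ^ 3 ≤ 2 / (‖x‖ / (2 * C)) ^ 3 := by gcongr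
        _ = 2 * (2 * C) ^ 3 * (‖x‖ ^ 3)⁻¹ := by
            field_simp
  -- upper bound on lattice points
  set M : ℝ := 2 * (‖ω₁‖ + ‖ω₃‖) with hMdef
  have hM : 0 < M := by
    have := norm_pos_iff.mpr hω₁
    have := norm_nonneg ω₃
    rw [hMdef]; linarith
  have hφle : ∀ x : Fin 2 → ℤ, ‖φ x‖ ≤ M * ‖x‖ := by
    intro x
    have e0 : ‖((x 0 : ℤ) : ℂ)‖ ≤ ‖x‖ := by
      rw [norm_intCast]; exact norm_le_pi_norm x 0
    have e1 : ‖((x 1 : ℤ) : ℂ)‖ ≤ ‖x‖ := by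
      rw [norm_intCast]; exact norm_le_pi_norm x 1
    have hn0 := norm_nonneg ω₁
    have hn1 := norm_nonneg ω₃
    calc ‖φ x‖ ≤ ‖2 * (x 0 : ℂ) * ω₁‖ + ‖2 * (x 1 : ℂ) * ω₃‖ := norm_add_le _ _
      _ = 2 * ‖((x 0 : ℤ) : ℂ)‖ * ‖ω₁‖ + 2 * ‖((x 1 : ℤ) : ℂ)‖ * ‖ω₃‖ := by
          rw [norm_mul, norm_mul, norm_mul, norm_mul]
          norm_num
      _ ≤ 2 * ‖x‖ * ‖ω₁‖ + 2 * ‖x‖ * ‖ω₃‖ := by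
          gcongr
      _ = M * ‖x‖ := by rw [hMdef]; ring
  have hzne : ∀ x : Fin 2 → ℤ, z - φ x ≠ 0 := by
    intro x h
    have h1 := hδ x
    rw [h, norm_zero] at h1
    linarith
  -- bound v for the ℘ series terms at z
  set A2 : ℝ := 1 / δ ^ 2 + C ^ 2 with hA2def
  set K2 : ℝ := 4 * C ^ 4 * ‖z‖ * (2 * M + ‖z‖) with hK2def
  set v : (Fin 2 → ℤ) → ℝ :=
    fun x => if ‖x‖ ≤ B then A2 else K2 * ‖x‖ ^ (-(3 : ℝ)) with hvdef
  have hvsum : Summable v := WPaux.summable_bound _ _ _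
  have hvbound : ∀ x : Fin 2 → ℤ,
      ‖(1 / (z - φ x) ^ 2 - 1 / (φ x) ^ 2 : ℂ)‖ ≤ v x := by
    intro x
    rw [hvdef]
    dsimp only
    split_ifs with h
    · refine le_trans (norm_sub_le _ _) ?_
      have e1 : ‖(1 : ℂ) / (z - φ x) ^ 2‖ ≤ 1 / δ ^ 2 := by
        rw [norm_div, norm_one, norm_pow]
        have h1 := hδ x
        gcongr
      have e2 : ‖(1 : ℂ) / (φ x) ^ 2‖ ≤ C ^ 2 := by
        by_cases hx0 : x = 0
        · subst hx0
          rw [show φ 0 = 0 from WPaux.latmap_zero ω₁ ω₃]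
          simp
          positivity
        · have hx1 : (1 : ℝ) ≤ ‖x‖ := by
            obtain ⟨i, hi⟩ : ∃ i, x i ≠ 0 := by
              by_contra hcon
              push_neg at hcon
              exact hx0 (funext hcon)
            calc (1 : ℝ) ≤ ‖x i‖ := by
                  rw [Int.norm_eq_abs]
                  exact_mod_cast Int.one_le_abs hi
              _ ≤ ‖x‖ := norm_le_pi_norm x i
          have hφpos : 1 / C ≤ ‖φ x‖ := by
            rw [div_le_iff₀ hC]
            nlinarith [hCb x]
          have hone : 1 ≤ C * ‖φ x‖ := by
            have h5 := mul_le_mul_of_nonneg_left hφpos hC.le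
            rwa [mul_one_div, div_self hC.ne'] at h5
          have hφp2 : (0:ℝ) < ‖φ x‖ := by
            have : (0:ℝ) < 1 / C := by positivity
            linarith
          rw [norm_div, norm_one, norm_pow]
          rw [div_le_iff₀ (by positivity : (0:ℝ) < ‖φ x‖ ^ 2)]
          nlinarith [hone, mul_self_nonneg (C * ‖φ x‖ - 1)]
      rw [hA2def]
      linarith
    · push_neg at h
      have hxpos : (0 : ℝ) < ‖x‖ := by linarith
      have hwne : φ x ≠ 0 := by
        intro hc
        have h1 := hCb x
        rw [hc, norm_zero, mul_zero] at h1
        linarith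
      have hkey : (1 / (z - φ x) ^ 2 - 1 / (φ x) ^ 2 : ℂ)
          = z * (2 * φ x - z) / ((z - φ x) ^ 2 * (φ x) ^ 2) := by
        field_simp [hzne x, hwne]
        ring
      have hd1 : ‖x‖ / (2 * C) ≤ ‖z - φ x‖ := hbig x h z (Metric.mem_ball_self hρ)
      have hd2 : ‖x‖ / C ≤ ‖φ x‖ := by
        rw [div_le_iff₀ hC]
        nlinarith [hCb x]
      have hnum : ‖z * (2 * φ x - z)‖ ≤ ‖z‖ * (2 * M + ‖z‖) * ‖x‖ := by
        rw [norm_mul]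
        have h1 : ‖2 * φ x - z‖ ≤ 2 * ‖φ x‖ + ‖z‖ := by
          calc ‖2 * φ x - z‖ ≤ ‖2 * φ x‖ + ‖z‖ := norm_sub_le _ _
            _ = 2 * ‖φ x‖ + ‖z‖ := by rw [norm_mul]; norm_num
        have h2 := hφle x
        have h3 : (1 : ℝ) ≤ ‖x‖ := by linarith
        have h4 : 2 * ‖φ x‖ + ‖z‖ ≤ 2 * (M * ‖x‖) + ‖z‖ * ‖x‖ := by
          nlinarith [mul_le_mul_of_nonneg_left h3 (norm_nonneg z)]
        calc ‖z‖ * ‖2 * φ x - z‖ ≤ ‖z‖ * (2 * ‖φ x‖ + ‖z‖) :=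
              mul_le_mul_of_nonneg_left h1 (norm_nonneg z)
          _ ≤ ‖z‖ * (2 * (M * ‖x‖) + ‖z‖ * ‖x‖) :=
              mul_le_mul_of_nonneg_left h4 (norm_nonneg z)
          _ = ‖z‖ * (2 * M + ‖z‖) * ‖x‖ := by ring
      have hden : (‖x‖ / (2 * C)) ^ 2 * (‖x‖ / C) ^ 2 ≤ ‖(z - φ x) ^ 2 * (φ x) ^ 2‖ := by
        rw [norm_mul, norm_pow, norm_pow]
        have p1 : (‖x‖ / (2 * C)) ^ 2 ≤ ‖z - φ x‖ ^ 2 := by gcongr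
        have p2 : (‖x‖ / C) ^ 2 ≤ ‖φ x‖ ^ 2 := by gcongr
        exact mul_le_mul p1 p2 (by positivity) (by positivity)
      rw [hkey, norm_div]
      calc ‖z * (2 * φ x - z)‖ / ‖(z - φ x) ^ 2 * (φ x) ^ 2‖
          ≤ (‖z‖ * (2 * M + ‖z‖) * ‖x‖) / ((‖x‖ / (2 * C)) ^ 2 * (‖x‖ / C) ^ 2) :=
            div_le_div₀ (by positivity) hnum (by positivity) hden
        _ = K2 * ‖x‖ ^ (-(3 : ℝ)) := by
            rw [hrp _ (norm_nonneg x), hK2def]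
            field_simp
            ring
  -- summability over the index type
  have hderivι : Summable (fun x : Fin 2 → ℤ => (-2 : ℂ) / (z - φ x) ^ 3) :=
    Summable.of_norm_bounded husum fun x => hubound x z (Metric.mem_ball_self hρ)
  have hPι : Summable (fun x : Fin 2 → ℤ => (1 / (z - φ x) ^ 2 - 1 / (φ x) ^ 2 : ℂ)) :=
    Summable.of_norm_bounded hvsum hvbound
  -- the equivalence between ℤ² and the lattice
  have hbij : Function.Bijective (fun x : Fin 2 → ℤ =>
      (⟨φ x, WPaux.latmap_mem ω₁ ω₃ x⟩ : {w : ℂ // w ∈ periodLattice ω₁ ω₃})) := by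
    constructor
    · intro a b hab
      exact hinj (congrArg Subtype.val hab)
    · rintro ⟨w, hw⟩
      obtain ⟨x, hx⟩ := (WPaux.mem_iff ω₁ ω₃).mp hw
      exact ⟨x, Subtype.ext hx⟩
  set E := Equiv.ofBijective _ hbij with hEdef
  have hEsymm : ∀ w : {w : ℂ // w ∈ periodLattice ω₁ ω₃}, φ (E.symm w) = (w : ℂ) := by
    intro w
    exact congrArg Subtype.val (E.apply_symm_apply w)
  -- conjunct 1 : summability over the lattice
  have hsum1 : Summable (fun w : {w : ℂ // w ∈ periodLattice ω₁ ω₃} =>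
      (-2 : ℂ) / (z - (w : ℂ)) ^ 3) := by
    have h1 : Summable ((fun x : Fin 2 → ℤ => (-2 : ℂ) / (z - φ x) ^ 3) ∘ E.symm) :=
      hderivι.comp_injective E.symm.injective
    refine h1.congr fun w => ?_
    simp only [Function.comp_apply, hEsymm]
  -- the injection from the punctured lattice
  set j : {w : ℂ // w ∈ periodLattice ω₁ ω₃ ∧ w ≠ 0} → (Fin 2 → ℤ) :=
    fun w => E.symm ⟨w.1, w.2.1⟩ with hjdef
  have hjval : ∀ w : {w : ℂ // w ∈ periodLattice ω₁ ω₃ ∧ w ≠ 0}, φ (j w) = (w : ℂ) :=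
    fun w => hEsymm ⟨w.1, w.2.1⟩
  have hjinj : Function.Injective j := by
    intro a b hab
    have h1 : φ (j a) = φ (j b) := congrArg φ hab
    rw [hjval, hjval] at h1
    exact Subtype.ext h1
  have hg0 : Summable (fun w : {w : ℂ // w ∈ periodLattice ω₁ ω₃ ∧ w ≠ 0} =>
      (1 / (z - (w : ℂ)) ^ 2 - 1 / (w : ℂ) ^ 2 : ℂ)) := by
    refine (hPι.comp_injective hjinj).congr fun w => ?_
    simp only [Function.comp_apply, hjval]
  have husum' : Summable (u ∘ j) := husum.comp_injective hjinj
  -- the derivative of the series part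
  have hwne : ∀ (w : {w : ℂ // w ∈ periodLattice ω₁ ω₃ ∧ w ≠ 0}),
      ∀ y ∈ Metric.ball z ρ, y ≠ (w : ℂ) := by
    intro w y hy h
    have h1 := hball (j w) y hy
    rw [hjval, ← h, sub_self, norm_zero] at h1
    linarith
  have hF : HasDerivAt
      (fun y => ∑' w : {w : ℂ // w ∈ periodLattice ω₁ ω₃ ∧ w ≠ 0},
        (1 / (y - (w : ℂ)) ^ 2 - 1 / (w : ℂ) ^ 2))
      (∑' w : {w : ℂ // w ∈ periodLattice ω₁ ω₃ ∧ w ≠ 0}, (-2 : ℂ) / (z - (w : ℂ)) ^ 3)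
      z := by
    apply hasDerivAt_tsum_of_isPreconnected husum' Metric.isOpen_ball
      (convex_ball z ρ).isPreconnected
      (g' := fun (w : {w : ℂ // w ∈ periodLattice ω₁ ω₃ ∧ w ≠ 0}) (y : ℂ) =>
        (-2 : ℂ) / (y - (w : ℂ)) ^ 3)
      ?_ ?_ (Metric.mem_ball_self hρ) hg0 (Metric.mem_ball_self hρ)
    · intro w y hy
      exact (WPaux.hasDerivAt_term (w : ℂ) y (hwne w y hy)).sub_const _
    · intro w y hy
      have h1 := hubound (j w) y hy
      rw [hjval] at h1
      exact h1
  -- derivative of the 1/z² term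
  have h1z : HasDerivAt (fun y : ℂ => 1 / y ^ 2) (-2 / z ^ 3) z := by
    have h1 := WPaux.hasDerivAt_term 0 z (by simpa using hz0)
    simpa using h1
  have hP : HasDerivAt (weierstrassP ω₁ ω₃)
      (-2 / z ^ 3 + ∑' w : {w : ℂ // w ∈ periodLattice ω₁ ω₃ ∧ w ≠ 0},
        (-2 : ℂ) / (z - (w : ℂ)) ^ 3) z := h1z.add hF
  -- identify the value of the derivative series
  have hval : weierstrassPDeriv ω₁ ω₃ z
      = -2 / z ^ 3 + ∑' w : {w : ℂ // w ∈ periodLattice ω₁ ω₃ ∧ w ≠ 0},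
        (-2 : ℂ) / (z - (w : ℂ)) ^ 3 := by
    set g0 : {w : ℂ // w ∈ periodLattice ω₁ ω₃} := ⟨0, h0mem⟩ with hg0def
    have hsplit := hsum1.tsum_subtype_add_tsum_subtype_compl {g0}
    have h1 : ∑' x : ({g0} : Set {w : ℂ // w ∈ periodLattice ω₁ ω₃}),
        (-2 : ℂ) / (z - ((x : {w : ℂ // w ∈ periodLattice ω₁ ω₃}) : ℂ)) ^ 3 = -2 / z ^ 3 := by
      rw [tsum_singleton g0 (fun w : {w : ℂ // w ∈ periodLattice ω₁ ω₃} =>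
        (-2 : ℂ) / (z - (w : ℂ)) ^ 3)]
      norm_num [hg0def]
    obtain ⟨eC, heC⟩ : ∃ e : {w : ℂ // w ∈ periodLattice ω₁ ω₃ ∧ w ≠ 0} ≃
        ({g0}ᶜ : Set {w : ℂ // w ∈ periodLattice ω₁ ω₃}),
        ∀ c, ((e c : {w : ℂ // w ∈ periodLattice ω₁ ω₃}) : ℂ) = (c : ℂ) := by
      have hmem : ∀ w : {w : ℂ // w ∈ periodLattice ω₁ ω₃ ∧ w ≠ 0},
          (⟨w.1, w.2.1⟩ : {w : ℂ // w ∈ periodLattice ω₁ ω₃}) ∈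
            ({g0}ᶜ : Set {w : ℂ // w ∈ periodLattice ω₁ ω₃}) := by
        intro w
        simp only [Set.mem_compl_iff, Set.mem_singleton_iff, hg0def]
        intro hc
        exact w.2.2 (congrArg Subtype.val hc)
      refine ⟨Equiv.ofBijective (fun w => ⟨⟨w.1, w.2.1⟩, hmem w⟩) ⟨?_, ?_⟩, fun c => rfl⟩
      · intro a b hab
        apply Subtype.ext
        exact congrArg (fun t => ((t : {w : ℂ // w ∈ periodLattice ω₁ ω₃}) : ℂ))
          (congrArg Subtype.val hab)
      · rintro ⟨⟨w, hw⟩, hne⟩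
        rw [Set.mem_compl_iff, Set.mem_singleton_iff] at hne
        refine ⟨⟨w, hw, fun h0 => hne (Subtype.ext (by rw [hg0def]; exact h0))⟩, rfl⟩
    have h2 := Equiv.tsum_eq eC (fun x : ({g0}ᶜ : Set {w : ℂ // w ∈ periodLattice ω₁ ω₃}) =>
      (-2 : ℂ) / (z - ((x : {w : ℂ // w ∈ periodLattice ω₁ ω₃}) : ℂ)) ^ 3)
    rw [weierstrassPDeriv, ← hsplit, h1, ← h2]
    congr 1
    exact tsum_congr fun c => by rw [heC]
  -- oddness
  have hneg : ∀ w : ℂ, w ∈ periodLattice ω₁ ω₃ → -w ∈ periodLattice ω₁ ω₃ := by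
    rintro w ⟨m, n, rfl⟩
    exact ⟨-m, -n, by push_cast; ring⟩
  have hodd : weierstrassPDeriv ω₁ ω₃ (-z) = - weierstrassPDeriv ω₁ ω₃ z := by
    set eneg : {w : ℂ // w ∈ periodLattice ω₁ ω₃} ≃ {w : ℂ // w ∈ periodLattice ω₁ ω₃} :=
      { toFun := fun w => ⟨-w.1, hneg w.1 w.2⟩
        invFun := fun w => ⟨-w.1, hneg w.1 w.2⟩
        left_inv := fun w => Subtype.ext (neg_neg _)
        right_inv := fun w => Subtype.ext (neg_neg _) } with henegdef
    calc weierstrassPDeriv ω₁ ω₃ (-z)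
        = ∑' w : {w : ℂ // w ∈ periodLattice ω₁ ω₃}, (-2 : ℂ) / (-z - (w : ℂ)) ^ 3 := rfl
      _ = ∑' w : {w : ℂ // w ∈ periodLattice ω₁ ω₃},
            (-2 : ℂ) / (-z - ((eneg w : {w : ℂ // w ∈ periodLattice ω₁ ω₃}) : ℂ)) ^ 3 :=
          (Equiv.tsum_eq eneg _).symm
      _ = ∑' w : {w : ℂ // w ∈ periodLattice ω₁ ω₃}, -((-2 : ℂ) / (z - (w : ℂ)) ^ 3) := by
          congr 1
          funext w
          have he1 : ((eneg w : {w : ℂ // w ∈ periodLattice ω₁ ω₃}) : ℂ) = -(w : ℂ) := rfl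
          rw [he1, show (-z - -(w : ℂ)) = -(z - (w : ℂ)) by ring,
            show (-(z - (w : ℂ))) ^ 3 = -((z - (w : ℂ)) ^ 3) by ring, div_neg]
      _ = - ∑' w : {w : ℂ // w ∈ periodLattice ω₁ ω₃}, (-2 : ℂ) / (z - (w : ℂ)) ^ 3 :=
          tsum_neg
      _ = - weierstrassPDeriv ω₁ ω₃ z := rfl
  exact ⟨hsum1, hval ▸ hP, hodd⟩
end

section
/- The lemniscatic period constant equals Γ(1/4)²/(2√(2π)); precisely, 2·∫₀¹ dt/√(1 − t⁴) = Γ(1/4)²/(2√(2π)) ≈ 2.62205755429212, where Γ is the gamma function and the integral is the real integral of (1 − t⁴)^{-1/2} over [0, 1]. -/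
open MeasureTheory Set intervalIntegral

/-- The real beta integrand for `(1/4, 1/2)`. -/
noncomputable def betaFn (u : ℝ) : ℝ := u ^ (-3/4 : ℝ) * (1 - u) ^ (-1/2 : ℝ)

lemma betaFn_complex (x : ℝ) (hx : x ∈ uIcc (0:ℝ) 1) :
    (x:ℂ) ^ ((1/4 : ℂ) - 1) * ((1:ℂ) - x) ^ ((1/2 : ℂ) - 1) = ((betaFn x : ℝ) : ℂ) := by
  rw [uIcc_of_le (by norm_num), mem_Icc] at hx
  have h1 : ((1/4 : ℂ) - 1) = ((-3/4 : ℝ) : ℂ) := by norm_num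
  have h2 : ((1/2 : ℂ) - 1) = ((-1/2 : ℝ) : ℂ) := by norm_num
  rw [h1, h2, betaFn, ← Complex.ofReal_cpow hx.1, ← Complex.ofReal_one, ← Complex.ofReal_sub,
    ← Complex.ofReal_cpow (by linarith), Complex.ofReal_mul]

lemma betaFn_integral :
    ∫ u in (0:ℝ)..1, betaFn u =
      Real.Gamma (1/4) * Real.Gamma (1/2) / Real.Gamma (3/4) := by
  have hB : Complex.betaIntegral (1/4) (1/2) = ((∫ u in (0:ℝ)..1, betaFn u : ℝ) : ℂ) := by
    rw [Complex.betaIntegral, ← intervalIntegral.integral_ofReal]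
    exact intervalIntegral.integral_congr betaFn_complex
  have hG := Complex.Gamma_mul_Gamma_eq_betaIntegral
    (s := 1/4) (t := 1/2) (by norm_num) (by norm_num)
  rw [show ((1:ℂ)/4 + 1/2) = 3/4 by norm_num, hB] at hG
  have c1 : ((1:ℂ)/4) = ((1/4 : ℝ) : ℂ) := by norm_num
  have c2 : ((1:ℂ)/2) = ((1/2 : ℝ) : ℂ) := by norm_num
  have c3 : ((3:ℂ)/4) = ((3/4 : ℝ) : ℂ) := by norm_num
  rw [c1, c2, c3, Complex.Gamma_ofReal, Complex.Gamma_ofReal, Complex.Gamma_ofReal,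
    ← Complex.ofReal_mul, ← Complex.ofReal_mul] at hG
  have := Complex.ofReal_injective hG
  have hpos : 0 < Real.Gamma (3/4) := Real.Gamma_pos_of_pos (by norm_num)
  field_simp
  linarith [this]

lemma betaFn_integrableOn : IntegrableOn betaFn (Icc (0:ℝ) 1) := by
  have h := Complex.betaIntegral_convergent (u := 1/4) (v := 1/2) (by norm_num) (by norm_num)
  rw [intervalIntegrable_iff_integrableOn_Ioc_of_le (by norm_num)] at h
  have h2 : IntegrableOn (fun x : ℝ => ((betaFn x : ℝ) : ℂ)) (Ioc (0:ℝ) 1) := by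
    refine h.congr_fun (fun x hx => ?_) measurableSet_Ioc
    exact betaFn_complex x (by rw [uIcc_of_le (by norm_num)]; exact Ioc_subset_Icc_self hx)
  have h3 : IntegrableOn betaFn (Ioc (0:ℝ) 1) := by
    have := (Complex.reCLM.integrable_comp h2)
    simp at this
    exact this
  rwa [integrableOn_Icc_iff_integrableOn_Ioc]


lemma lemn_integrable : IntegrableOn (fun t : ℝ => 1 / Real.sqrt (1 - t ^ 4)) (Ioc (0:ℝ) 1) := by
  have hb : IntervalIntegrable (fun x : ℝ => x ^ (-1/2 : ℝ)) volume 0 1 :=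
    intervalIntegrable_rpow' (by norm_num)
  have hb2 : IntervalIntegrable (fun x : ℝ => (1 - x) ^ (-1/2 : ℝ)) volume 0 1 := by
    have := hb.comp_sub_left 1
    simpa using this.symm
  rw [intervalIntegrable_iff_integrableOn_Ioc_of_le (by norm_num)] at hb2
  refine MeasureTheory.Integrable.mono hb2 ?_ ?_
  · apply Measurable.aestronglyMeasurable
    exact (measurable_const.div ((measurable_const.sub (measurable_id.pow_const 4)).sqrt))
  · filter_upwards [ae_restrict_mem measurableSet_Ioc] with t ht
    rw [mem_Ioc] at ht
    have h3 : t ^ 3 ≤ 1 := pow_le_one₀ ht.1.le ht.2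
    have h4 : t ^ 4 ≤ t := by nlinarith [ht.1.le]
    have h1 : (0:ℝ) ≤ 1 - t ^ 4 := by nlinarith [ht.2, ht.1.le]
    have h2 : (0:ℝ) ≤ 1 - t := by linarith [ht.2]
    have hle : Real.sqrt (1 - t) ≤ Real.sqrt (1 - t ^ 4) := Real.sqrt_le_sqrt (by linarith)
    rw [Real.norm_eq_abs, Real.norm_eq_abs, abs_of_nonneg (by positivity),
      abs_of_nonneg (by positivity)]
    rw [show (-1/2 : ℝ) = -(1/2) by norm_num, Real.rpow_neg h2, ← Real.sqrt_eq_rpow]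
    rcases eq_or_lt_of_le h2 with h | h
    · have ht1 : t = 1 := by linarith
      simp [ht1]
    · rw [one_div, inv_le_inv₀ (Real.sqrt_pos.mpr (by linarith)) (Real.sqrt_pos.mpr h)]
      exact hle

lemma key_eq (t : ℝ) (ht : t ∈ Ioc (0:ℝ) 1) :
    (4 * t ^ 3) • ((1/4 : ℝ) * betaFn (t ^ 4)) = 1 / Real.sqrt (1 - t ^ 4) := by
  rw [mem_Ioc] at ht
  have ht0 : 0 < t := ht.1
  have h1 : (0:ℝ) ≤ 1 - t ^ 4 := by
    have : t ^ 4 ≤ 1 := pow_le_one₀ ht0.le ht.2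
    linarith
  have e1 : (t ^ 4 : ℝ) ^ (-3/4 : ℝ) = (t ^ 3)⁻¹ := by
    rw [← Real.rpow_natCast t 4, ← Real.rpow_mul ht0.le]
    norm_num
  have e2 : (1 - t ^ 4 : ℝ) ^ (-1/2 : ℝ) = 1 / Real.sqrt (1 - t ^ 4) := by
    rw [show (-1/2 : ℝ) = -(1/2) by norm_num, Real.rpow_neg h1, ← Real.sqrt_eq_rpow, one_div]
  rw [betaFn, e1, e2, smul_eq_mul]
  have h3 : (t ^ 3) ≠ 0 := by positivity
  field_simp

lemma subst_step :
    ∫ t in (0:ℝ)..1, 1 / Real.sqrt (1 - t ^ 4) = ∫ u in (0:ℝ)..1, (1/4 : ℝ) * betaFn u := by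
  have h := intervalIntegral.integral_comp_smul_deriv''' (a := 0) (b := 1)
    (f := fun t => t ^ 4) (f' := fun t => 4 * t ^ 3) (g := fun u => (1/4 : ℝ) * betaFn u)
    ?hf ?hff' ?hgc ?hg1 ?hg2
  case hf => exact (continuous_pow 4).continuousOn
  case hff' =>
    intro x hx
    have := (hasDerivAt_pow 4 x).hasDerivWithinAt (s := Ioi x)
    exact this.congr_deriv (by norm_num)
  case hgc =>
    have himg : (fun t : ℝ => t ^ 4) '' Ioo (min 0 1) (max 0 1) ⊆ Ioo (0:ℝ) 1 := by
      rintro _ ⟨t, ht, rfl⟩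
      simp only [min_eq_left, max_eq_right, zero_le_one, mem_Ioo] at ht ⊢
      exact ⟨pow_pos ht.1 4, pow_lt_one₀ ht.1.le ht.2 (by norm_num)⟩
    refine ContinuousOn.mono ?_ himg
    intro u hu
    rw [mem_Ioo] at hu
    have c1 : ContinuousAt (fun u : ℝ => u ^ (-3/4 : ℝ)) u :=
      Real.continuousAt_rpow_const u _ (Or.inl hu.1.ne')
    have c2 : ContinuousAt (fun u : ℝ => (1 - u) ^ (-1/2 : ℝ)) u := by
      have : ContinuousAt (fun v : ℝ => v ^ (-1/2 : ℝ)) (1 - u) :=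
        Real.continuousAt_rpow_const _ _ (Or.inl (by linarith [hu.2]))
      exact this.comp (continuousAt_const.sub continuousAt_id)
    exact ((continuousAt_const.mul (c1.mul c2)).continuousWithinAt)
  case hg1 =>
    have himg : (fun t : ℝ => t ^ 4) '' uIcc (0:ℝ) 1 ⊆ Icc (0:ℝ) 1 := by
      rintro _ ⟨t, ht, rfl⟩
      rw [uIcc_of_le (by norm_num), mem_Icc] at ht
      exact ⟨pow_nonneg ht.1 4, pow_le_one₀ ht.1 ht.2⟩
    exact MeasureTheory.IntegrableOn.mono_set (betaFn_integrableOn.const_mul (1/4)) himg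
  case hg2 =>
    rw [uIcc_of_le (by norm_num), integrableOn_Icc_iff_integrableOn_Ioc]
    exact lemn_integrable.congr_fun (fun t ht => (key_eq t ht).symm) measurableSet_Ioc
  rw [show ((0:ℝ) ^ 4) = 0 by norm_num, show ((1:ℝ) ^ 4) = 1 by norm_num] at h
  rw [← h]
  refine intervalIntegral.integral_congr_ae ?_
  refine Filter.Eventually.of_forall (fun x hx => ?_)
  rw [uIoc_of_le (by norm_num)] at hx
  exact (key_eq x hx).symm

/-- The lemniscatic period constant: `2·∫₀¹ dt/√(1 − t⁴) = Γ(1/4)²/(2√(2π))`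
(≈ 2.62205755429212), where Γ is the gamma function. -/
theorem lemniscatic_period_constant :
    2 * ∫ t in (0 : ℝ)..1, 1 / Real.sqrt (1 - t ^ 4) =
      Real.Gamma (1 / 4) ^ 2 / (2 * Real.sqrt (2 * Real.pi)) := by
  rw [subst_step, intervalIntegral.integral_const_mul, betaFn_integral]
  have hG : 0 < Real.Gamma (1/4) := Real.Gamma_pos_of_pos (by norm_num)
  have hmul := Real.Gamma_mul_Gamma_one_sub (1/4)
  rw [show (1 : ℝ) - 1/4 = 3/4 by norm_num, show Real.pi * (1/4) = Real.pi / 4 by ring,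
    Real.sin_pi_div_four] at hmul
  have s2 : Real.sqrt 2 * Real.sqrt 2 = 2 := Real.mul_self_sqrt (by norm_num)
  have sp : Real.sqrt Real.pi * Real.sqrt Real.pi = Real.pi := Real.mul_self_sqrt Real.pi_nonneg
  have hs2 : (0:ℝ) < Real.sqrt 2 := by positivity
  have hsp : (0:ℝ) < Real.sqrt Real.pi := Real.sqrt_pos.mpr Real.pi_pos
  have h34 : Real.Gamma (3/4) = Real.sqrt 2 * Real.pi / Real.Gamma (1/4) := by
    have h2 : Real.pi / (Real.sqrt 2 / 2) = Real.sqrt 2 * Real.pi := by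
      rw [div_div_eq_mul_div, div_eq_iff hs2.ne']
      nlinarith [s2]
    rw [h2] at hmul
    field_simp
    linarith [hmul]
  rw [h34, Real.Gamma_one_half_eq, Real.sqrt_mul (by norm_num : (0:ℝ) ≤ 2)]
  have hG34 : Real.sqrt 2 * Real.pi / Real.Gamma (1/4) ≠ 0 := by positivity
  field_simp
  linear_combination 4 * sp
end
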